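/- Let k be a field of characteristic zero, G an abelian group, and (R,Δ) a commutative G-graded differential k-algebra such that R is a graded field. Then contraction I ↦ I ∩ Z_Δ(R) and extension J ↦ RJ are mutually inverse, inclusion-preserving bijections between the set of Δ-ideals of R and the set of ideals of Z_Δ(R); in particular, I = R·(I ∩ Z_Δ(R)) for every Δ-ideal I of R, and J = (RJ) ∩ Z_Δ(R) for every ideal J of Z_Δ(R). -/

import Mathlib

set_option linter.unusedSectionVars false


section Defs

variable {k R : Type*} [CommRing k] [CommRing R] [Algebra k R]

/-- An ideal stable under all derivations in `Δ`. -/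
def IsDeltaIdeal (Δ : Set (Derivation k R R)) (I : Ideal R) : Prop :=
  ∀ δ ∈ Δ, ∀ x ∈ I, δ x ∈ I

/-- The `Δ`-core of an ideal `J`: the largest `Δ`-stable ideal contained in `J`. -/
def deltaCore (Δ : Set (Derivation k R R)) (J : Ideal R) : Ideal R :=
  sSup {I : Ideal R | IsDeltaIdeal Δ I ∧ I ≤ J}

/-- A `Δ`-prime ideal: a proper `Δ`-ideal `Q` such that whenever a product of two
`Δ`-ideals lies in `Q`, one of them lies in `Q`. -/
def IsDeltaPrime (Δ : Set (Derivation k R R)) (Q : Ideal R) : Prop :=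
  Q ≠ ⊤ ∧ IsDeltaIdeal Δ Q ∧
    ∀ I J : Ideal R, IsDeltaIdeal Δ I → IsDeltaIdeal Δ J → I * J ≤ Q → I ≤ Q ∨ J ≤ Q

/-- A `Δ`-primitive ideal: the `Δ`-core of a maximal ideal. -/
def IsDeltaPrimitive (Δ : Set (Derivation k R R)) (P : Ideal R) : Prop :=
  ∃ M : Ideal R, M.IsMaximal ∧ deltaCore Δ M = P

end Defs

/-- The `Δ`-center of `R`: elements annihilated by every derivation in `Δ`. -/
def deltaCenter {k R : Type*} [CommRing k] [CommRing R] [Algebra k R]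
    (Δ : Set (Derivation k R R)) : Subalgebra k R where
  carrier := {r : R | ∀ δ ∈ Δ, δ r = 0}
  mul_mem' := by
    intro a b ha hb δ hδ
    rw [Derivation.leibniz, ha δ hδ, hb δ hδ, smul_zero, smul_zero, add_zero]
  add_mem' := by
    intro a b ha hb δ hδ
    rw [map_add, ha δ hδ, hb δ hδ, add_zero]
  algebraMap_mem' := by
    intro c δ hδ
    simp

/-- The homogeneous `k`-derivations of degree `d` with respect to a grading `𝒜`:
those `δ` with `δ(R_g) ⊆ R_{g+d}` for all `g`. -/
def homogeneousDerivations {k R G : Type*} [CommRing k] [CommRing R] [Algebra k R]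
    [AddCommGroup G] (𝒜 : G → Submodule k R) (d : G) :
    Submodule k (Derivation k R R) where
  carrier := {δ : Derivation k R R | ∀ g : G, ∀ x ∈ 𝒜 g, δ x ∈ 𝒜 (g + d)}
  add_mem' := by
    intro a b ha hb g x hx
    rw [Derivation.add_apply]
    exact Submodule.add_mem _ (ha g x hx) (hb g x hx)
  zero_mem' := by
    intro g x hx
    simp
  smul_mem' := by
    intro c δ hδ g x hx
    rw [Derivation.smul_apply]
    exact Submodule.smul_mem _ c (hδ g x hx)

/-- `R` is a graded field with respect to `𝒜`: a domain in which every nonzero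
homogeneous element is invertible. -/
def IsGradedField {k R G : Type*} [CommRing k] [CommRing R] [Algebra k R]
    (𝒜 : G → Submodule k R) : Prop :=
  IsDomain R ∧ ∀ (g : G) (x : R), x ∈ 𝒜 g → x ≠ 0 → IsUnit x


open DirectSum

section H
variable {k R G : Type*} [Field k] [CommRing R] [Algebra k R]
  [AddCommGroup G] [DecidableEq G] (𝒜 : G → Submodule k R) [GradedAlgebra 𝒜]

/-- The degree-`g` component of `x`. -/
noncomputable def gcomp (x : R) (g : G) : R := (DirectSum.decompose 𝒜 x g : R)

lemma gcomp_mem (x : R) (g : G) : gcomp 𝒜 x g ∈ 𝒜 g := SetLike.coe_mem _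

/-- `gcomp` as an additive monoid hom in `x`. -/
noncomputable def gcompHom (g : G) : R →+ R where
  toFun x := gcomp 𝒜 x g
  map_zero' := by simp [gcomp]
  map_add' x y := by simp [gcomp, DirectSum.decompose_add, DirectSum.add_apply]

@[simp] lemma gcompHom_apply (g : G) (x : R) : gcompHom 𝒜 g x = gcomp 𝒜 x g := rfl

lemma gcomp_of_mem_same {x : R} {g : G} (h : x ∈ 𝒜 g) : gcomp 𝒜 x g = x :=
  DirectSum.decompose_of_mem_same 𝒜 h

lemma gcomp_of_mem_ne {x : R} {g h : G} (hx : x ∈ 𝒜 g) (hgh : g ≠ h) : gcomp 𝒜 x h = 0 := by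
  have := DirectSum.decompose_of_mem_ne 𝒜 hx hgh
  simpa [gcomp] using this

lemma gcomp_support (x : R) : ∃ S : Finset G, ∀ g ∉ S, gcomp 𝒜 x g = 0 := by
  classical
  refine ⟨(DirectSum.decompose 𝒜 x).support, fun g hg => ?_⟩
  simp only [DFinsupp.notMem_support_iff] at hg
  simp [gcomp, hg]

lemma sum_gcomp {x : R} {S : Finset G} (h : ∀ g ∉ S, gcomp 𝒜 x g = 0) :
    ∑ g ∈ S, gcomp 𝒜 x g = x := by
  classical
  have hsub : (DirectSum.decompose 𝒜 x).support ⊆ S := by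
    intro g hg
    by_contra hgS
    exact (DFinsupp.mem_support_iff.1 hg) (Subtype.coe_injective (h g hgS))
  conv_rhs => rw [← DirectSum.sum_support_decompose 𝒜 x]
  simp only [gcomp]
  exact (Finset.sum_subset hsub (fun g _ hg => by
    simp only [DFinsupp.notMem_support_iff] at hg
    simp [hg])).symm

lemma gcomp_finsum {ι : Type*} (s : Finset ι) (p : ι → R) (dg : ι → G)
    (hp : ∀ i ∈ s, p i ∈ 𝒜 (dg i)) (h : G) :
    gcomp 𝒜 (∑ i ∈ s, p i) h = ∑ i ∈ s, (if dg i = h then p i else 0) := by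
  classical
  rw [← gcompHom_apply, map_sum]
  refine Finset.sum_congr rfl (fun i hi => ?_)
  by_cases hd : dg i = h
  · subst hd; simp [gcomp_of_mem_same 𝒜 (hp i hi)]
  · simp [hd, gcomp_of_mem_ne 𝒜 (hp i hi) hd]

lemma gcomp_mul_left {a : R} {h : G} (ha : a ∈ 𝒜 h) (x : R) (g : G) :
    gcomp 𝒜 (a * x) (h + g) = a * gcomp 𝒜 x g := by
  classical
  obtain ⟨S, hS⟩ := gcomp_support 𝒜 x
  conv_lhs => rw [← sum_gcomp 𝒜 hS, Finset.mul_sum]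
  rw [gcomp_finsum 𝒜 S _ (fun g' => h + g') (fun i _ => SetLike.mul_mem_graded ha (gcomp_mem 𝒜 x i))]
  have : ∀ g' ∈ S, (if h + g' = h + g then a * gcomp 𝒜 x g' else 0)
      = if g' = g then a * gcomp 𝒜 x g' else 0 := by
    intro g' _
    simp [add_right_inj]
  rw [Finset.sum_congr rfl this, Finset.sum_ite_eq' S g (fun g' => a * gcomp 𝒜 x g')]
  by_cases hg : g ∈ S
  · simp [hg]
  · simp [hg, hS g hg]

lemma gcomp_one : gcomp 𝒜 (1 : R) (0 : G) = 1 :=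
  gcomp_of_mem_same 𝒜 (SetLike.one_mem_graded 𝒜)

/-- homogeneous inverses: in a graded field, a nonzero homogeneous element has a
homogeneous inverse of opposite degree. -/
lemma exists_hom_inv (hgf : ∀ (g : G) (x : R), x ∈ 𝒜 g → x ≠ 0 → IsUnit x)
    {a : R} {g : G} (ha : a ∈ 𝒜 g) (ha0 : a ≠ 0) :
    ∃ b ∈ 𝒜 (-g), a * b = 1 := by
  obtain ⟨u, hu⟩ := hgf g a ha ha0
  refine ⟨gcomp 𝒜 (↑u⁻¹ : R) (-g), gcomp_mem _ _ _, ?_⟩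
  have h1 : a * (↑u⁻¹ : R) = 1 := by rw [← hu]; exact u.mul_inv
  have := gcomp_mul_left 𝒜 ha (↑u⁻¹ : R) (-g)
  rw [h1] at this
  rw [← this, add_neg_cancel, gcomp_one]
end H


section D
variable {k R G : Type*} [Field k] [CommRing R] [Algebra k R]
  [AddCommGroup G] [DecidableEq G] (𝒜 : G → Submodule k R) [GradedAlgebra 𝒜]
  (Δ : Submodule k (Derivation k R R))

lemma delta_eq_zero_of_hom (hΔ : Δ = ⨆ d : G, (homogeneousDerivations 𝒜 d ⊓ Δ)) {x : R}
    (h : ∀ d : G, ∀ δ ∈ homogeneousDerivations 𝒜 d ⊓ Δ, δ x = 0) :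
    ∀ δ ∈ Δ, δ x = 0 := by
  intro δ hδ
  let K : Submodule k (Derivation k R R) :=
  { carrier := {δ : Derivation k R R | δ x = 0}
    add_mem' := by intro a b ha hb; simp only [Set.mem_setOf_eq] at *
                   rw [Derivation.add_apply, ha, hb, add_zero]
    zero_mem' := by simp
    smul_mem' := by intro c δ' h'; simp only [Set.mem_setOf_eq] at *
                    rw [Derivation.smul_apply, h', smul_zero] }
  have hK : Δ ≤ K := by
    rw [hΔ]
    exact iSup_le (fun d => fun δ' hδ' => h d δ' hδ')
  exact hK hδ

lemma derivationFinsetSum (δ : Derivation k R R) {ι : Type*} (s : Finset ι) (f : ι → R) :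
    δ (∑ i ∈ s, f i) = ∑ i ∈ s, δ (f i) :=
  map_sum δ.toLinearMap f s

lemma gcomp_deriv {d : G} {δ : Derivation k R R} (hδ : δ ∈ homogeneousDerivations 𝒜 d)
    (x : R) (g : G) : δ (gcomp 𝒜 x g) = gcomp 𝒜 (δ x) (g + d) := by
  classical
  obtain ⟨S, hS⟩ := gcomp_support 𝒜 x
  have hS' : ∀ g' ∉ insert g S, gcomp 𝒜 x g' = 0 := fun g' hg' => hS g' (fun hh => hg' (Finset.mem_insert_of_mem hh))
  conv_rhs => rw [← sum_gcomp 𝒜 hS']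
  rw [derivationFinsetSum, gcomp_finsum 𝒜 _ _ (fun g' => g' + d)
    (fun i _ => hδ i _ (gcomp_mem 𝒜 x i))]
  have : ∀ g' ∈ insert g S, (if g' + d = g + d then δ (gcomp 𝒜 x g') else 0)
      = if g' = g then δ (gcomp 𝒜 x g') else 0 := by intro g' _; simp [add_left_inj]
  rw [Finset.sum_congr rfl this, Finset.sum_ite_eq' _ g]
  simp

lemma mem_deltaCenter_iff {x : R} :
    x ∈ deltaCenter (Δ : Set (Derivation k R R)) ↔ ∀ δ ∈ Δ, δ x = 0 := Iff.rfl

lemma gcomp_mem_deltaCenter (hΔ : Δ = ⨆ d : G, (homogeneousDerivations 𝒜 d ⊓ Δ)) {z : R}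
    (hz : z ∈ deltaCenter (Δ : Set (Derivation k R R))) (g : G) :
    gcomp 𝒜 z g ∈ deltaCenter (Δ : Set (Derivation k R R)) := by
  rw [mem_deltaCenter_iff]
  apply delta_eq_zero_of_hom 𝒜 Δ hΔ
  intro d δ hδ
  rw [gcomp_deriv 𝒜 (Submodule.mem_inf.1 hδ).1, hz δ (Submodule.mem_inf.1 hδ).2]
  simp [gcomp]

lemma deltaCenter_inv (hgf : IsGradedField 𝒜) {z : R} {g : G}
    (hz : z ∈ deltaCenter (Δ : Set (Derivation k R R))) (hzg : z ∈ 𝒜 g) (h0 : z ≠ 0) :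
    ∃ w ∈ deltaCenter (Δ : Set (Derivation k R R)), z * w = 1 := by
  haveI : IsDomain R := hgf.1
  obtain ⟨b, hbg, hb⟩ := exists_hom_inv 𝒜 hgf.2 hzg h0
  refine ⟨b, ?_, hb⟩
  rw [mem_deltaCenter_iff]
  intro δ hδ
  have h1 : δ (z * b) = 0 := by rw [hb, Derivation.map_one_eq_zero]
  rw [Derivation.leibniz, hz δ hδ, smul_zero, add_zero, smul_eq_mul] at h1
  exact (mul_eq_zero.1 h1).resolve_left h0

end D

section Main
variable {k R G : Type*} [Field k] [CommRing R] [Algebra k R]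
  [AddCommGroup G] [DecidableEq G] (𝒜 : G → Submodule k R) [GradedAlgebra 𝒜]
  (Δ : Submodule k (Derivation k R R))

lemma part1 (Δset : Set (Derivation k R R)) (J : Ideal (deltaCenter Δset)) :
    IsDeltaIdeal Δset (Ideal.span (Subtype.val '' (J : Set (deltaCenter Δset)))) := by
  intro δ hδ x hx
  induction hx using Submodule.span_induction with
  | mem c hc =>
    obtain ⟨⟨z, hzZ⟩, _, rfl⟩ := hc
    have : δ z = 0 := hzZ δ hδ
    rw [this]
    exact Ideal.zero_mem _
  | zero => rw [map_zero]; exact Ideal.zero_mem _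
  | add a b ha hb iha ihb => rw [map_add]; exact Ideal.add_mem _ iha ihb
  | smul r a ha iha =>
    rw [smul_eq_mul, Derivation.leibniz, smul_eq_mul, smul_eq_mul]
    exact Ideal.add_mem _ (Ideal.mul_mem_left _ _ iha) (Ideal.mul_mem_right _ _ ha)
end Main

section Main2
variable {k R G : Type*} [Field k] [CommRing R] [Algebra k R]
  [AddCommGroup G] [DecidableEq G] (𝒜 : G → Submodule k R) [GradedAlgebra 𝒜]
  (Δ : Submodule k (Derivation k R R))

lemma part2 (hΔ : Δ = ⨆ d : G, (homogeneousDerivations 𝒜 d ⊓ Δ)) (hgf : IsGradedField 𝒜)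
    (I : Ideal R) (hI : IsDeltaIdeal (Δ : Set (Derivation k R R)) I) :
    Ideal.span (Subtype.val ''
        ((Ideal.comap (deltaCenter (Δ : Set (Derivation k R R))).val.toRingHom I) :
          Set (deltaCenter (Δ : Set (Derivation k R R))))) = I := by
  classical
  haveI : IsDomain R := hgf.1
  set Zc := deltaCenter (Δ : Set (Derivation k R R)) with hZc
  set E := Ideal.span (Subtype.val ''
        ((Ideal.comap Zc.val.toRingHom I) : Set Zc)) with hE
  have hEI : E ≤ I := by
    rw [hE]
    apply Ideal.span_le.2
    rintro _ ⟨⟨z, hz⟩, hmem, rfl⟩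
    exact hmem
  refine le_antisymm hEI ?_
  have claim : ∀ n : ℕ, ∀ x ∈ I, ∀ S : Finset G, (∀ g ∉ S, gcomp 𝒜 x g = 0) →
      S.card ≤ n → x ∈ E := by
    intro n
    induction n with
    | zero =>
      intro x hxI S hS hcard
      have hSempty : S = ∅ := Finset.card_eq_zero.mp (le_antisymm hcard (Nat.zero_le _))
      have hx0 : x = 0 := by
        rw [← sum_gcomp 𝒜 hS, hSempty, Finset.sum_empty]
      rw [hx0]; exact Ideal.zero_mem _
    | succ n IH =>
      intro x hxI S hS hcard
      by_cases hall : ∀ g ∈ S, gcomp 𝒜 x g = 0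
      · have hx0 : x = 0 := by rw [← sum_gcomp 𝒜 hS]; exact Finset.sum_eq_zero hall
        rw [hx0]; exact Ideal.zero_mem _
      push_neg at hall
      obtain ⟨g1, hg1S, hg1⟩ := hall
      set u := gcomp 𝒜 x g1 with hu
      obtain ⟨v, hvmem, hv⟩ := exists_hom_inv 𝒜 hgf.2 (gcomp_mem 𝒜 x g1) hg1
      set x' := v * x with hx'
      have hx'I : x' ∈ I := Ideal.mul_mem_left _ v hxI
      have hx'comp : ∀ h : G, gcomp 𝒜 x' h = v * gcomp 𝒜 x (g1 + h) := by
        intro h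
        have h2 := gcomp_mul_left 𝒜 hvmem x (g1 + h)
        rwa [neg_add_cancel_left] at h2
      set T := S.image (fun g => -g1 + g) with hT
      have hTsupp : ∀ h ∉ T, gcomp 𝒜 x' h = 0 := by
        intro h hh
        rw [hx'comp, hS (g1 + h) (fun hmem =>
          hh (Finset.mem_image.2 ⟨g1 + h, hmem, neg_add_cancel_left g1 h⟩)), mul_zero]
      have hx'0 : gcomp 𝒜 x' 0 = 1 := by
        have h2 := hx'comp 0
        rw [add_zero, ← hu, mul_comm, hv] at h2
        exact h2
      have h0T : (0 : G) ∈ T := Finset.mem_image.2 ⟨g1, hg1S, neg_add_cancel g1⟩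
      have hTcard : T.card ≤ n + 1 := le_trans Finset.card_image_le hcard
      have hxu : x = u * x' := by
        rw [hx', ← mul_assoc, hv, one_mul]
      -- x' written as a sum of its components over T
      have hx'sum : ∀ δ : Derivation k R R, δ x' = ∑ g ∈ T, δ (gcomp 𝒜 x' g) := by
        intro δ
        conv_lhs => rw [← sum_gcomp 𝒜 hTsupp]
        exact derivationFinsetSum δ T _
      -- every homogeneous derivative of x' lies in E
      have hδx'E : ∀ d : G, ∀ δ ∈ homogeneousDerivations 𝒜 d ⊓ Δ, δ x' ∈ E := by
        intro d δ hδ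
        obtain ⟨hδhom, hδΔ⟩ := Submodule.mem_inf.1 hδ
        have hδx'I : δ x' ∈ I := hI δ hδΔ x' hx'I
        apply IH (δ x') hδx'I ((T.erase 0).image (fun g => g + d))
        · intro h hh
          rw [hx'sum δ, gcomp_finsum 𝒜 T _ (fun g => g + d)
            (fun i _ => hδhom i _ (gcomp_mem 𝒜 x' i))]
          apply Finset.sum_eq_zero
          intro g hgT
          by_cases hgd : g + d = h
          · have hg0 : g = 0 := by
              by_contra hne
              exact hh (Finset.mem_image.2 ⟨g, Finset.mem_erase.2 ⟨hne, hgT⟩, hgd⟩)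
            rw [if_pos hgd, hg0, hx'0, Derivation.map_one_eq_zero]
          · rw [if_neg hgd]
        · have h2 := Finset.card_erase_of_mem h0T
          calc ((T.erase 0).image (fun g => g + d)).card ≤ (T.erase 0).card :=
              Finset.card_image_le
            _ ≤ n := by omega
      by_cases hzero : ∀ d : G, ∀ δ ∈ homogeneousDerivations 𝒜 d ⊓ Δ, δ x' = 0
      · have hx'Z : x' ∈ Zc := by
          rw [hZc, mem_deltaCenter_iff]
          exact delta_eq_zero_of_hom 𝒜 Δ hΔ hzero
        have hx'E : x' ∈ E := by
          rw [hE]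
          exact Ideal.subset_span ⟨⟨x', hx'Z⟩, hx'I, rfl⟩
        rw [hxu]; exact Ideal.mul_mem_left _ u hx'E
      · push_neg at hzero
        obtain ⟨d, δ, hδ, hδx'⟩ := hzero
        obtain ⟨hδhom, hδΔ⟩ := Submodule.mem_inf.1 hδ
        obtain ⟨g2, hg2T, hg2⟩ : ∃ g ∈ T, δ (gcomp 𝒜 x' g) ≠ 0 := by
          by_contra hcon
          push_neg at hcon
          exact hδx' (by rw [hx'sum δ]; exact Finset.sum_eq_zero hcon)
        have hg2ne : g2 ≠ 0 := by
          intro h0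
          rw [h0, hx'0] at hg2
          exact hg2 δ.map_one_eq_zero
        have hwmem : δ (gcomp 𝒜 x' g2) ∈ 𝒜 (g2 + d) := hδhom g2 _ (gcomp_mem 𝒜 x' g2)
        obtain ⟨w', hw'mem, hw'⟩ := exists_hom_inv 𝒜 hgf.2 hwmem hg2
        set a := gcomp 𝒜 x' g2 * w' with ha
        have hamem : a ∈ 𝒜 (g2 + -(g2 + d)) :=
          SetLike.mul_mem_graded (gcomp_mem 𝒜 x' g2) hw'mem
        set y := x' - a * δ x' with hy
        have hyI : y ∈ I :=
          Ideal.sub_mem _ hx'I (Ideal.mul_mem_left _ a (hI δ hδΔ x' hx'I))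
        have hprod : ∀ h : G,
            gcomp 𝒜 (a * δ x') h = (if h ∈ T then a * δ (gcomp 𝒜 x' h) else 0) := by
          intro h
          have hsum2 : a * δ x' = ∑ g ∈ T, a * δ (gcomp 𝒜 x' g) := by
            rw [hx'sum δ, Finset.mul_sum]
          rw [hsum2, gcomp_finsum 𝒜 T _ (fun g => g) (fun i _ => by
            have h1 : a * δ (gcomp 𝒜 x' i) ∈ 𝒜 (g2 + -(g2 + d) + (i + d)) :=
              SetLike.mul_mem_graded hamem (hδhom i _ (gcomp_mem 𝒜 x' i))
            have h2 : g2 + -(g2 + d) + (i + d) = i := by abel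
            rwa [h2] at h1), Finset.sum_ite_eq' T h]
        have hysupp : ∀ h ∉ T.erase g2, gcomp 𝒜 y h = 0 := by
          intro h hh
          have hgy : gcomp 𝒜 y h = gcomp 𝒜 x' h - gcomp 𝒜 (a * δ x') h :=
            map_sub (gcompHom 𝒜 h) x' (a * δ x')
          rw [hgy, hprod]
          by_cases hhT : h ∈ T
          · have hhg2 : h = g2 := by
              by_contra hne
              exact hh (Finset.mem_erase.2 ⟨hne, hhT⟩)
            subst hhg2
            rw [if_pos hhT, ha, mul_assoc, mul_comm w' _, hw', mul_one, sub_self]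
          · rw [if_neg hhT, hTsupp h hhT, sub_zero]
        have hycard : (T.erase g2).card ≤ n := by
          have h2 := Finset.card_erase_of_mem hg2T
          omega
        have hyE : y ∈ E := IH y hyI (T.erase g2) hysupp hycard
        have hx'E : x' ∈ E := by
          have h2 : x' = y + a * δ x' := by rw [hy]; ring
          rw [h2]
          exact Ideal.add_mem _ hyE (Ideal.mul_mem_left _ a (hδx'E d δ hδ))
        rw [hxu]; exact Ideal.mul_mem_left _ u hx'E
  intro x hx
  obtain ⟨S, hS⟩ := gcomp_support 𝒜 x
  exact claim S.card x hx S hS le_rfl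

end Main2

section Main3
variable {k R G : Type*} [Field k] [CommRing R] [Algebra k R]
  [AddCommGroup G] [DecidableEq G] (𝒜 : G → Submodule k R) [GradedAlgebra 𝒜]
  (Δ : Submodule k (Derivation k R R))

lemma part3 (hΔ : Δ = ⨆ d : G, (homogeneousDerivations 𝒜 d ⊓ Δ)) (hgf : IsGradedField 𝒜)
    (J : Ideal (deltaCenter (Δ : Set (Derivation k R R)))) :
    Ideal.comap (deltaCenter (Δ : Set (Derivation k R R))).val.toRingHom
        (Ideal.span (Subtype.val ''
          (J : Set (deltaCenter (Δ : Set (Derivation k R R)))))) = J := by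
  classical
  haveI : IsDomain R := hgf.1
  revert J
  set Zc := deltaCenter (Δ : Set (Derivation k R R)) with hZc
  intro J
  -- the Zorn argument: a graded `Zc`-module complement of `Zc` in `R`
  set 𝒮 : Set (Submodule Zc R) :=
    {M | (∀ x ∈ M, ∀ g : G, gcomp 𝒜 x g ∈ M) ∧ ∀ x ∈ M, x ∈ Zc → x = 0} with h𝒮
  have hbot : (⊥ : Submodule Zc R) ∈ 𝒮 := by
    constructor
    · intro x hx g
      rw [Submodule.mem_bot] at hx ⊢
      rw [hx]
      exact map_zero (gcompHom 𝒜 g)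
    · intro x hx _
      rwa [Submodule.mem_bot] at hx
  obtain ⟨M, -, hMmax⟩ := zorn_le_nonempty₀ 𝒮 (by
    intro c hc hchain y hy
    refine ⟨sSup c, ⟨?_, ?_⟩, fun z hz => le_sSup hz⟩
    · intro x hx g
      obtain ⟨m, hm, hxm⟩ := (Submodule.mem_sSup_of_directed ⟨y, hy⟩ hchain.directedOn).1 hx
      exact le_sSup hm ((hc hm).1 x hxm g)
    · intro x hx hxZ
      obtain ⟨m, hm, hxm⟩ := (Submodule.mem_sSup_of_directed ⟨y, hy⟩ hchain.directedOn).1 hx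
      exact (hc hm).2 x hxm hxZ) ⊥ hbot
  have hM𝒮 : M ∈ 𝒮 := hMmax.1
  have hMg : ∀ x ∈ M, ∀ g : G, gcomp 𝒜 x g ∈ M := hM𝒮.1
  have hMz : ∀ x ∈ M, x ∈ Zc → x = 0 := hM𝒮.2
  -- Step A: homogeneous elements decompose
  have stepA : ∀ (g : G) (x : R), x ∈ 𝒜 g → ∃ m ∈ M, ∃ z ∈ Zc, x = m + z := by
    intro g x hxg
    by_contra hx
    push_neg at hx
    have hxM : x ∉ M := fun h => hx x h 0 Zc.zero_mem (add_zero x).symm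
    set M' := M ⊔ Submodule.span Zc {x} with hM'
    have hxM' : x ∈ M' := Submodule.mem_sup_right (Submodule.mem_span_singleton_self x)
    have key : ∀ y ∈ M', ∃ m ∈ M, ∃ z : Zc, y = m + (z : R) * x := by
      intro y hy
      rw [hM', Submodule.mem_sup] at hy
      obtain ⟨m, hm, p, hp, rfl⟩ := hy
      obtain ⟨z, rfl⟩ := Submodule.mem_span_singleton.1 hp
      exact ⟨m, hm, z, by rw [Algebra.smul_def]; rfl⟩
    have hM'𝒮 : M' ∈ 𝒮 := by
      constructor
      · intro y hy h
        obtain ⟨m, hm, z, rfl⟩ := key y hy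
        have hc1 : gcomp 𝒜 (m + ↑z * x) h = gcomp 𝒜 m h + gcomp 𝒜 (↑z * x) h :=
          map_add (gcompHom 𝒜 h) m _
        rw [hc1]
        apply Submodule.add_mem
        · exact Submodule.mem_sup_left (hMg m hm h)
        · have h3 : gcomp 𝒜 (x * ↑z) (g + (-g + h)) = x * gcomp 𝒜 (↑z : R) (-g + h) :=
            gcomp_mul_left 𝒜 hxg (↑z : R) (-g + h)
          rw [add_neg_cancel_left] at h3
          rw [mul_comm ((z : R)) x, h3]
          have hzc : gcomp 𝒜 (↑z : R) (-g + h) ∈ Zc :=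
            gcomp_mem_deltaCenter 𝒜 Δ hΔ z.2 (-g + h)
          have h4 : x * gcomp 𝒜 (↑z : R) (-g + h) = (⟨_, hzc⟩ : Zc) • x := by
            rw [Algebra.smul_def, mul_comm]; rfl
          rw [h4]
          exact Submodule.mem_sup_right
            (Submodule.smul_mem _ _ (Submodule.mem_span_singleton_self x))
      · intro y hy hyZ
        obtain ⟨m, hm, z, hy'⟩ := key y hy
        by_cases hz0 : (z : R) = 0
        · rw [hz0, zero_mul, add_zero] at hy'
          exact hMz y (hy' ▸ hm) hyZ
        · exfalso
          have hexg : ∃ g', gcomp 𝒜 (↑z : R) g' ≠ 0 := by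
            by_contra hcon
            push_neg at hcon
            obtain ⟨S, hS⟩ := gcomp_support 𝒜 (↑z : R)
            exact hz0 (by rw [← sum_gcomp 𝒜 hS]; exact Finset.sum_eq_zero fun g' _ => hcon g')
          obtain ⟨g', hg'⟩ := hexg
          have hzc' : gcomp 𝒜 (↑z : R) g' ∈ Zc :=
            gcomp_mem_deltaCenter 𝒜 Δ hΔ z.2 g'
          obtain ⟨w, hwZ, hwinv⟩ := deltaCenter_inv 𝒜 Δ hgf hzc' (gcomp_mem 𝒜 _ g') hg'
          have hx1 : (↑z : R) * x = y - m := by rw [hy']; ring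
          have h4 : gcomp 𝒜 ((↑z : R) * x) (g + g') = x * gcomp 𝒜 (↑z : R) g' := by
            rw [mul_comm ((z : R)) x]
            exact gcomp_mul_left 𝒜 hxg (↑z : R) g'
          have h5 : gcomp 𝒜 (y - m) (g + g') = gcomp 𝒜 y (g + g') - gcomp 𝒜 m (g + g') :=
            map_sub (gcompHom 𝒜 _) _ _
          have hygZ : gcomp 𝒜 y (g + g') ∈ Zc := gcomp_mem_deltaCenter 𝒜 Δ hΔ hyZ (g + g')
          have hmgM : gcomp 𝒜 m (g + g') ∈ M := hMg m hm (g + g')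
          apply hx (-(w * gcomp 𝒜 m (g + g'))) ?_ (w * gcomp 𝒜 y (g + g')) ?_ ?_
          · refine Submodule.neg_mem _ ?_
            have h6 : w * gcomp 𝒜 m (g + g') = (⟨w, hwZ⟩ : Zc) • gcomp 𝒜 m (g + g') := by
              rw [Algebra.smul_def]; rfl
            rw [h6]
            exact Submodule.smul_mem _ _ hmgM
          · exact Zc.mul_mem hwZ hygZ
          · have h7 : x = w * (x * gcomp 𝒜 (↑z : R) g') := by
              rw [mul_comm x _, ← mul_assoc, mul_comm w _, hwinv, one_mul]
            rw [h7, ← h4, hx1, h5, mul_sub]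
            ring
    exact hxM ((hMmax.2 hM'𝒮 le_sup_left) hxM')
  -- Step B: every element decomposes
  have decomp : ∀ r : R, ∃ m ∈ M, ∃ z ∈ Zc, r = m + z := by
    intro r
    obtain ⟨S, hS⟩ := gcomp_support 𝒜 r
    have hsum := sum_gcomp 𝒜 hS
    have key : ∀ s : Finset G, ∃ m ∈ M, ∃ z ∈ Zc, (∑ g ∈ s, gcomp 𝒜 r g) = m + z := by
      intro s
      induction s using Finset.induction_on with
      | empty => exact ⟨0, Submodule.zero_mem _, 0, Zc.zero_mem, by simp⟩
      | insert _ _ ha ih =>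
        obtain ⟨m, hm, z, hz, heq⟩ := ih
        obtain ⟨m', hm', z', hz', heq'⟩ := stepA _ _ (gcomp_mem 𝒜 r _)
        exact ⟨m' + m, Submodule.add_mem _ hm' hm, z' + z, Zc.add_mem hz' hz, by
          rw [Finset.sum_insert ha, heq, heq']; ring⟩
    obtain ⟨m, hm, z, hz, heq⟩ := key S
    exact ⟨m, hm, z, hz, by rw [← hsum, heq]⟩
  -- Conclusion
  apply le_antisymm
  · intro ζ hζ
    have hζ' : (ζ : R) ∈ Submodule.span R (Subtype.val '' (J : Set Zc)) := hζ
    rw [Submodule.mem_span_set'] at hζ'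
    obtain ⟨n, f, gs, hsum⟩ := hζ'
    choose m hmM z hzZ hfz using fun i => decomp (f i)
    have hj : ∀ i, ∃ j : Zc, j ∈ J ∧ (j : R) = ((gs i : R)) := by
      intro i
      obtain ⟨j, hjJ, hjv⟩ := (gs i).2
      exact ⟨j, hjJ, hjv⟩
    choose j hjJ hjv using hj
    set jsum : Zc := ∑ i, ⟨z i, hzZ i⟩ * j i with hjsum
    have hjsumJ : jsum ∈ J := Submodule.sum_mem _ fun i _ => Ideal.mul_mem_left _ _ (hjJ i)
    have hcoe : (jsum : R) = ∑ i, z i * ((gs i : R)) := by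
      rw [hjsum]
      push_cast
      exact Finset.sum_congr rfl fun i _ => by rw [hjv i]
    have hdiff : (ζ : R) - (jsum : R) ∈ M := by
      have h8 : (ζ : R) - (jsum : R) = ∑ i, m i * ((gs i : R)) := by
        rw [← hsum, hcoe, ← Finset.sum_sub_distrib]
        refine Finset.sum_congr rfl fun i _ => ?_
        rw [smul_eq_mul, hfz i]
        ring
      rw [h8]
      apply Submodule.sum_mem
      intro i _
      have h9 : m i * ((gs i : R)) = (j i) • m i := by
        rw [Algebra.smul_def, mul_comm, ← hjv i]
        rfl
      rw [h9]
      exact Submodule.smul_mem _ _ (hmM i)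
    have hdiffZ : (ζ : R) - (jsum : R) ∈ Zc := Zc.sub_mem ζ.2 jsum.2
    have h0 : (ζ : R) - (jsum : R) = 0 := hMz _ hdiff hdiffZ
    have hfin : ζ = jsum := Subtype.ext (sub_eq_zero.1 h0)
    rw [hfin]
    exact hjsumJ
  · intro jj hjj
    exact Ideal.subset_span ⟨jj, hjj, rfl⟩

end Main3

/-- Let `(R,Δ)` be a commutative `G`-graded differential `k`-algebra
with `R` a graded field.  Then contraction `I ↦ I ∩ Z_Δ(R)` and extension `J ↦ RJ` are
mutually inverse, inclusion-preserving bijections between the `Δ`-ideals of `R` and the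
ideals of `Z_Δ(R)`. -/
theorem deltaIdeals_correspond_to_center_ideals
    {k R G : Type*} [Field k] [CharZero k] [CommRing R] [Algebra k R]
    [AddCommGroup G] [DecidableEq G]
    (𝒜 : G → Submodule k R) [GradedAlgebra 𝒜]
    (Δ : Submodule k (Derivation k R R))
    (hΔ : Δ = ⨆ d : G, (homogeneousDerivations 𝒜 d ⊓ Δ))
    (hgf : IsGradedField 𝒜) :
    -- the extension of any ideal of Z_Δ(R) is a Δ-ideal of R
    (∀ J : Ideal (deltaCenter (Δ : Set (Derivation k R R))),
      IsDeltaIdeal (Δ : Set (Derivation k R R))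
        (Ideal.span (Subtype.val '' (J : Set (deltaCenter (Δ : Set (Derivation k R R))))))) ∧
    -- extension ∘ contraction is the identity on Δ-ideals of R
    (∀ I : Ideal R, IsDeltaIdeal (Δ : Set (Derivation k R R)) I →
      Ideal.span (Subtype.val ''
        ((Ideal.comap (deltaCenter (Δ : Set (Derivation k R R))).val.toRingHom I) :
          Set (deltaCenter (Δ : Set (Derivation k R R))))) = I) ∧
    -- contraction ∘ extension is the identity on ideals of Z_Δ(R)
    (∀ J : Ideal (deltaCenter (Δ : Set (Derivation k R R))),
      Ideal.comap (deltaCenter (Δ : Set (Derivation k R R))).val.toRingHom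
        (Ideal.span (Subtype.val ''
          (J : Set (deltaCenter (Δ : Set (Derivation k R R)))))) = J) := by
  exact ⟨fun J => part1 (Δ : Set (Derivation k R R)) J,
    fun I hI => part2 𝒜 Δ hΔ hgf I hI,
    fun J => part3 𝒜 Δ hΔ hgf J⟩
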